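/- Fix n ≥ 1 and work over the field F of rational functions in the 2(n−1) variables q_1,…,q_{n−1},t_1,…,t_{n−1} over ℚ. Let K_n(Q,T) be the matrix indexed by compositions of n with (I,J) entry ∏_{k∈Des(J)} ṽ(I,k), and let K_n(Q,𝟏) be its specialization obtained by substituting t_j = 1 for all j (a matrix over F that is invertible, since its determinant ∏_{m=1}^{n−1}∏_{k=1}^{m}(1−q_k)^{2^{n−1−m}C(m−1,k−1)} is nonzero). Then the product K_n(Q,T)·K_n(Q,𝟏)^{−1} is lower triangular with respect to the order b(I) := ∑_{k∈Des(I)} 2^{n−1−k} on compositions: its (I,J) entry is 0 whenever b(I) < b(J). -/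

import Mathlib

open Finset

instance {n : ℕ} : DecidableEq (Composition n) := fun a b =>
  decidable_of_iff (a.blocks = b.blocks) ⟨fun h => Composition.ext h, fun h => congrArg _ h⟩

/-- The descent set of a composition of `n`: the set of proper partial sums
`i₁, i₁+i₂, …, i₁+⋯+i_{ℓ(I)−1}`, a subset of `{1,…,n−1}`. -/
def Des {n : ℕ} (I : Composition n) : Finset ℕ :=
  (Finset.Ioo 0 I.length).image I.sizeUpTo

/-- `d I k` is the number of descents of `I` that are strictly less than `k`. -/
def d {n : ℕ} (I : Composition n) (k : ℕ) : ℕ :=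
  ((Des I).filter (· < k)).card

/-- The field of rational functions over `ℚ` in the independent indeterminates
`q_j = X (false, j)` and `t_i = X (true, i)`. -/
abbrev FQT : Type _ := FractionRing (MvPolynomial (Bool × ℕ) ℚ)

/-- The indeterminate `q_j` in the field of rational functions. -/
noncomputable def qv (j : ℕ) : FQT :=
  algebraMap (MvPolynomial (Bool × ℕ) ℚ) FQT (MvPolynomial.X (false, j))

/-- The indeterminate `t_i` in the field of rational functions. -/
noncomputable def tv (i : ℕ) : FQT :=
  algebraMap (MvPolynomial (Bool × ℕ) ℚ) FQT (MvPolynomial.X (true, i))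

/-- `ṽ(I,k) := t_{1+d(I,k)}` if `k ∈ Des I`, and `q_{k−d(I,k)}` otherwise. -/
noncomputable def vM {n : ℕ} (I : Composition n) (k : ℕ) : FQT :=
  if k ∈ Des I then tv (1 + d I k) else qv (k - d I k)

/-- The multiparameter Kostka matrix `K_n(Q,T)` with `(I,J)` entry `∏_{k ∈ Des J} ṽ(I,k)`. -/
noncomputable def KQT (n : ℕ) : Matrix (Composition n) (Composition n) FQT :=
  Matrix.of fun I J => ∏ k ∈ Des J, vM I k

/-- `b(I) := ∑_{k ∈ Des I} 2^{n−1−k}`, the standard ordering of compositions. -/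
def bOrd {n : ℕ} (I : Composition n) : ℕ :=
  ∑ k ∈ Des I, 2 ^ (n - 1 - k)

/-- The specialization `K_n(Q,𝟏)` of `K_n(Q,T)` at `t_j = 1` for all `j`. -/
noncomputable def KQ1 (n : ℕ) : Matrix (Composition n) (Composition n) FQT :=
  Matrix.of fun I J => ∏ k ∈ Des J, if k ∈ Des I then (1 : FQT) else qv (k - d I k)


/- ### abstract layer -/

def dd (S : Finset ℕ) (k : ℕ) : ℕ := (S.filter (· < k)).card

noncomputable def vv (S : Finset ℕ) (k : ℕ) : FQT :=
  if k ∈ S then tv (1 + dd S k) else qv (k - dd S k)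

noncomputable def v1 (S : Finset ℕ) (k : ℕ) : FQT :=
  if k ∈ S then 1 else qv (k - dd S k)

noncomputable def KR (S T : Finset ℕ) : FQT := ∏ k ∈ T, vv S k

noncomputable def K1R (S T : Finset ℕ) : FQT := ∏ k ∈ T, v1 S k

def Below (S U : Finset ℕ) : Prop :=
  U = S ∨ ∃ m, m ∈ S ∧ m ∉ U ∧ ∀ k, k < m → (k ∈ S ↔ k ∈ U)

lemma qv_ne_one (j : ℕ) : qv j ≠ 1 := by
  intro h
  have hinj := IsFractionRing.injective (MvPolynomial (Bool × ℕ) ℚ) FQT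
  have : (MvPolynomial.X (false, j) : MvPolynomial (Bool × ℕ) ℚ) = 1 := by
    apply hinj
    simpa [qv, map_one] using h
  have := congrArg MvPolynomial.constantCoeff this
  simp at this

lemma one_sub_qv_ne (j : ℕ) : (1 : FQT) - qv j ≠ 0 :=
  sub_ne_zero_of_ne (qv_ne_one j).symm

section step

variable {a : ℕ} {s : Finset ℕ} (hlt : ∀ x ∈ s, x < a)

include hlt

lemma mem_erase_iff_of_lt {S : Finset ℕ} {k : ℕ} (hk : k ∈ s) :
    k ∈ S ↔ k ∈ S.erase a := by
  have : k ≠ a := ne_of_lt (hlt k hk)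
  simp [Finset.mem_erase, this]

omit hlt in
lemma dd_erase {S : Finset ℕ} {k : ℕ} (hk : k ≤ a) : dd S k = dd (S.erase a) k := by
  unfold dd
  congr 1
  ext x
  simp only [Finset.mem_filter, Finset.mem_erase]
  constructor
  · rintro ⟨hx, hxk⟩; exact ⟨⟨by omega, hx⟩, hxk⟩
  · rintro ⟨⟨_, hx⟩, hxk⟩; exact ⟨hx, hxk⟩

lemma dd_at_top {S : Finset ℕ} (hS : S ⊆ insert a s) : dd S a = (S.erase a).card := by
  unfold dd
  congr 1
  ext x
  simp only [Finset.mem_filter, Finset.mem_erase]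
  constructor
  · rintro ⟨hx, hxa⟩; exact ⟨by omega, hx⟩
  · rintro ⟨hxa, hx⟩
    refine ⟨hx, ?_⟩
    rcases Finset.mem_insert.1 (hS hx) with h | h
    · omega
    · exact hlt _ h

lemma vv_erase {S : Finset ℕ} {k : ℕ} (hk : k ∈ s) : vv S k = vv (S.erase a) k := by
  have h1 : dd S k = dd (S.erase a) k := dd_erase (le_of_lt (hlt k hk))
  have h2 : k ∈ S ↔ k ∈ S.erase a := mem_erase_iff_of_lt hlt hk
  unfold vv
  by_cases h : k ∈ S.erase a
  · rw [if_pos (h2.2 h), if_pos h, h1]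
  · rw [if_neg (fun hh => h (h2.1 hh)), if_neg h, h1]

lemma v1_erase {S : Finset ℕ} {k : ℕ} (hk : k ∈ s) : v1 S k = v1 (S.erase a) k := by
  have h1 : dd S k = dd (S.erase a) k := dd_erase (le_of_lt (hlt k hk))
  have h2 : k ∈ S ↔ k ∈ S.erase a := mem_erase_iff_of_lt hlt hk
  unfold v1
  by_cases h : k ∈ S.erase a
  · rw [if_pos (h2.2 h), if_pos h]
  · rw [if_neg (fun hh => h (h2.1 hh)), if_neg h, h1]

lemma KR_erase {S T : Finset ℕ} (hT : T ⊆ s) : KR S T = KR (S.erase a) T :=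
  Finset.prod_congr rfl fun k hk => vv_erase hlt (hT hk)

lemma K1R_erase {S T : Finset ℕ} (hT : T ⊆ s) : K1R S T = K1R (S.erase a) T :=
  Finset.prod_congr rfl fun k hk => v1_erase hlt (hT hk)

lemma KR_split {S T : Finset ℕ} (hT : T ⊆ insert a s) :
    KR S T = (if a ∈ T then vv S a else 1) * KR S (T.erase a) := by
  by_cases h : a ∈ T
  · simp only [h, if_true]
    exact (Finset.mul_prod_erase T _ h).symm
  · simp only [h, if_false, one_mul, KR, Finset.erase_eq_of_notMem h]

lemma K1R_split {S T : Finset ℕ} (hT : T ⊆ insert a s) :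
    K1R S T = (if a ∈ T then v1 S a else 1) * K1R S (T.erase a) := by
  by_cases h : a ∈ T
  · simp only [h, if_true]
    exact (Finset.mul_prod_erase T _ h).symm
  · simp only [h, if_false, one_mul, K1R, Finset.erase_eq_of_notMem h]

end step

lemma erase_subset_of_subset_insert {a : ℕ} {s S : Finset ℕ} (h : S ⊆ insert a s) :
    S.erase a ⊆ s := by
  intro x hx
  rcases Finset.mem_erase.1 hx with ⟨hxa, hxS⟩
  rcases Finset.mem_insert.1 (h hxS) with h' | h'
  · exact absurd h' hxa
  · exact h'

lemma eq_of_erase_eq {a : ℕ} {S T : Finset ℕ} (h : S.erase a = T.erase a)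
    (h2 : a ∈ S ↔ a ∈ T) : S = T := by
  ext x
  by_cases hx : x = a
  · subst hx; exact h2
  · constructor
    · intro hxS
      have : x ∈ S.erase a := Finset.mem_erase.2 ⟨hx, hxS⟩
      rw [h] at this
      exact (Finset.mem_erase.1 this).2
    · intro hxT
      have : x ∈ T.erase a := Finset.mem_erase.2 ⟨hx, hxT⟩
      rw [← h] at this
      exact (Finset.mem_erase.1 this).2

lemma dd_top_of_subset {a : ℕ} {s : Finset ℕ} (hlt : ∀ x ∈ s, x < a) {U : Finset ℕ}
    (hU : U ⊆ s) : dd U a = U.card := by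
  have h := dd_at_top hlt (hU.trans (Finset.subset_insert a s))
  rwa [Finset.erase_eq_of_notMem (fun h' => lt_irrefl a (hlt a (hU h')))] at h

set_option maxHeartbeats 2000000 in
theorem main_induction (s : Finset ℕ) : ∃ L M : Finset ℕ → Finset ℕ → FQT,
    (∀ S ∈ s.powerset, ∀ T ∈ s.powerset, KR S T = ∑ U ∈ s.powerset, L S U * K1R U T) ∧
    (∀ S ∈ s.powerset, ∀ T ∈ s.powerset,
      (∑ U ∈ s.powerset, K1R S U * M U T) = if S = T then 1 else 0) ∧
    (∀ S ∈ s.powerset, ∀ U ∈ s.powerset, L S U ≠ 0 → Below S U) := by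
  induction s using Finset.induction_on_max with
  | empty =>
    refine ⟨fun S U => if S = U then 1 else 0, fun S U => if S = U then 1 else 0, ?_, ?_, ?_⟩
    · intro S hS T hT
      simp only [Finset.powerset_empty, Finset.mem_singleton] at hS hT
      subst hS; subst hT
      simp [KR, K1R]
    · intro S hS T hT
      simp only [Finset.powerset_empty, Finset.mem_singleton] at hS hT
      subst hS; subst hT
      simp [K1R]
    · intro S _ U _ h
      by_cases he : S = U
      · exact Or.inl he.symm
      · simp [he] at h
  | insert a s hlt ih =>
    obtain ⟨L, M, h1, h2, h3⟩ := ih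
    have ha : a ∉ s := fun h => lt_irrefl a (hlt a h)
    refine ⟨fun S U => if S ⊆ insert a s ∧ U ⊆ insert a s then
        L (S.erase a) (U.erase a) *
          (if a ∈ U then (vv S a - qv (a - (U.erase a).card)) / (1 - qv (a - (U.erase a).card))
           else (1 - vv S a) / (1 - qv (a - (U.erase a).card)))
      else 0,
      fun U T => if U ⊆ insert a s ∧ T ⊆ insert a s then
        M (U.erase a) (T.erase a) *
          ((if a ∈ T then (if a ∈ U then 1 else -qv (a - (T.erase a).card))
            else (if a ∈ U then (-1 : FQT) else 1)) / (1 - qv (a - (T.erase a).card)))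
      else 0, ?_, ?_, ?_⟩
    · -- triangular factorization
      intro S hS T hT
      rw [Finset.mem_powerset] at hS hT
      have hS' : S.erase a ∈ s.powerset := Finset.mem_powerset.2 (erase_subset_of_subset_insert hS)
      have hT'sub : T.erase a ⊆ s := erase_subset_of_subset_insert hT
      have hT' : T.erase a ∈ s.powerset := Finset.mem_powerset.2 hT'sub
      have key : ∀ U ∈ s.powerset,
          ((if S ⊆ insert a s ∧ U ⊆ insert a s then
            L (S.erase a) (U.erase a) *
              (if a ∈ U then (vv S a - qv (a - (U.erase a).card)) / (1 - qv (a - (U.erase a).card))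
               else (1 - vv S a) / (1 - qv (a - (U.erase a).card)))
            else 0) * K1R U T) +
          ((if S ⊆ insert a s ∧ insert a U ⊆ insert a s then
            L (S.erase a) ((insert a U).erase a) *
              (if a ∈ insert a U then
                (vv S a - qv (a - ((insert a U).erase a).card)) /
                  (1 - qv (a - ((insert a U).erase a).card))
               else (1 - vv S a) / (1 - qv (a - ((insert a U).erase a).card)))
            else 0) * K1R (insert a U) T)
          = (if a ∈ T then vv S a else 1) * (L (S.erase a) U * K1R U (T.erase a)) := by
        intro U hU
        rw [Finset.mem_powerset] at hU
        have haU : a ∉ U := fun h => ha (hU h)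
        have hUi : U ⊆ insert a s := hU.trans (Finset.subset_insert a s)
        have hUe : U.erase a = U := Finset.erase_eq_of_notMem haU
        have hiUe : (insert a U).erase a = U := Finset.erase_insert haU
        have c1 : S ⊆ insert a s ∧ U ⊆ insert a s := ⟨hS, hUi⟩
        have c2 : S ⊆ insert a s ∧ insert a U ⊆ insert a s :=
          ⟨hS, Finset.insert_subset_insert a hU⟩
        rw [if_pos c1, if_pos c2, hUe, hiUe, if_neg haU,
          if_pos (Finset.mem_insert_self a U)]
        rw [K1R_split hlt hT, K1R_split hlt hT]
        have hv1U : v1 U a = qv (a - U.card) := by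
          unfold v1
          rw [if_neg haU, dd_top_of_subset hlt hU]
        have hv1iU : v1 (insert a U) a = 1 := by
          unfold v1
          rw [if_pos (Finset.mem_insert_self a U)]
        have hK1e : K1R (insert a U) (T.erase a) = K1R U (T.erase a) := by
          rw [K1R_erase hlt hT'sub, hiUe]
        rw [hv1U, hv1iU, hK1e]
        have hq : (1 : FQT) - qv (a - U.card) ≠ 0 := one_sub_qv_ne _
        by_cases haT : a ∈ T
        · simp only [if_pos haT]
          field_simp
          ring
        · simp only [if_neg haT, one_mul]
          field_simp
          ring
      rw [Finset.sum_powerset_insert ha, ← Finset.sum_add_distrib, Finset.sum_congr rfl key,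
        ← Finset.mul_sum, ← h1 _ hS' _ hT']
      rw [KR_split hlt hT, KR_erase hlt hT'sub]
    · -- inverse
      intro S hS T hT
      rw [Finset.mem_powerset] at hS hT
      have hS'sub : S.erase a ⊆ s := erase_subset_of_subset_insert hS
      have hS' : S.erase a ∈ s.powerset := Finset.mem_powerset.2 hS'sub
      have hT'sub : T.erase a ⊆ s := erase_subset_of_subset_insert hT
      have hT' : T.erase a ∈ s.powerset := Finset.mem_powerset.2 hT'sub
      have hq : (1 : FQT) - qv (a - (T.erase a).card) ≠ 0 := one_sub_qv_ne _
      have key : ∀ U ∈ s.powerset,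
          (K1R S U * (if U ⊆ insert a s ∧ T ⊆ insert a s then
            M (U.erase a) (T.erase a) *
              ((if a ∈ T then (if a ∈ U then (1:FQT) else -qv (a - (T.erase a).card))
                else (if a ∈ U then (-1 : FQT) else 1)) / (1 - qv (a - (T.erase a).card)))
            else 0)) +
          (K1R S (insert a U) * (if insert a U ⊆ insert a s ∧ T ⊆ insert a s then
            M ((insert a U).erase a) (T.erase a) *
              ((if a ∈ T then (if a ∈ insert a U then (1:FQT) else -qv (a - (T.erase a).card))
                else (if a ∈ insert a U then (-1 : FQT) else 1)) / (1 - qv (a - (T.erase a).card)))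
            else 0))
          = (K1R (S.erase a) U * M U (T.erase a)) *
            (((if a ∈ T then -qv (a - (T.erase a).card) else 1)
              + v1 S a * (if a ∈ T then (1:FQT) else -1)) / (1 - qv (a - (T.erase a).card))) := by
        intro U hU
        rw [Finset.mem_powerset] at hU
        have haU : a ∉ U := fun h => ha (hU h)
        have hUi : U ⊆ insert a s := hU.trans (Finset.subset_insert a s)
        have hUe : U.erase a = U := Finset.erase_eq_of_notMem haU
        have hiUe : (insert a U).erase a = U := Finset.erase_insert haU
        have c1 : U ⊆ insert a s ∧ T ⊆ insert a s := ⟨hUi, hT⟩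
        have c2 : insert a U ⊆ insert a s ∧ T ⊆ insert a s :=
          ⟨Finset.insert_subset_insert a hU, hT⟩
        have hKins : K1R S (insert a U) = v1 S a * K1R S U := by
          rw [K1R, K1R, Finset.prod_insert haU]
        have hKer : K1R S U = K1R (S.erase a) U := K1R_erase hlt hU
        rw [if_pos c1, if_pos c2, hUe, hiUe, hKins, hKer]
        by_cases haT : a ∈ T
        · simp only [if_pos haT, if_neg haU, if_pos (Finset.mem_insert_self a U)]
          ring
        · simp only [if_neg haT, if_neg haU, if_pos (Finset.mem_insert_self a U)]
          ring
      rw [Finset.sum_powerset_insert ha, ← Finset.sum_add_distrib, Finset.sum_congr rfl key,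
        ← Finset.sum_mul, h2 _ hS' _ hT']
      by_cases hST' : S.erase a = T.erase a
      · rw [if_pos hST', one_mul]
        have hdd : qv (a - dd S a) = qv (a - (T.erase a).card) := by
          rw [dd_at_top hlt hS, hST']
        by_cases haS : a ∈ S <;> by_cases haT : a ∈ T
        · have hST : S = T := eq_of_erase_eq hST' (by tauto)
          rw [if_pos hST]
          simp only [v1, if_pos haS, if_pos haT]
          rw [div_eq_one_iff_eq hq]
          ring
        · have hST : S ≠ T := fun h => haT (h ▸ haS)
          rw [if_neg hST]
          simp only [v1, if_pos haS, if_neg haT]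
          have : ((1:FQT) + 1 * -1) = 0 := by ring
          rw [this, zero_div]
        · have hST : S ≠ T := fun h => haS (h ▸ haT)
          rw [if_neg hST]
          simp only [v1, if_neg haS, if_pos haT]
          rw [hdd]
          have : (-qv (a - (T.erase a).card) + qv (a - (T.erase a).card) * 1 : FQT) = 0 := by
            ring
          rw [this, zero_div]
        · have hST : S = T := eq_of_erase_eq hST' (by tauto)
          rw [if_pos hST]
          simp only [v1, if_neg haS, if_neg haT]
          rw [hdd, div_eq_one_iff_eq hq]
          ring
      · rw [if_neg hST', zero_mul]
        have hST : S ≠ T := fun h => hST' (by rw [h])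
        rw [if_neg hST]
    · -- triangularity
      intro S hS U hU hL
      rw [Finset.mem_powerset] at hS hU
      have c0 : S ⊆ insert a s ∧ U ⊆ insert a s := ⟨hS, hU⟩
      dsimp only at hL
      rw [if_pos c0] at hL
      have hL1 : L (S.erase a) (U.erase a) ≠ 0 := fun h => hL (by rw [h, zero_mul])
      have hB := h3 _ (Finset.mem_powerset.2 (erase_subset_of_subset_insert hS))
        _ (Finset.mem_powerset.2 (erase_subset_of_subset_insert hU)) hL1
      have hCne : (if a ∈ U then (vv S a - qv (a - (U.erase a).card)) / (1 - qv (a - (U.erase a).card))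
               else (1 - vv S a) / (1 - qv (a - (U.erase a).card))) ≠ 0 :=
        fun h => hL (by rw [h, mul_zero])
      rcases hB with heq | ⟨m, hmS, hmU, hag⟩
      · -- erased sets are equal
        by_cases haSU : (a ∈ S ↔ a ∈ U)
        · exact Or.inl (eq_of_erase_eq heq haSU.symm)
        · by_cases haS : a ∈ S
          · have haU : a ∉ U := fun h => haSU ⟨fun _ => h, fun _ => haS⟩
            refine Or.inr ⟨a, haS, haU, fun k hk => ?_⟩
            have hka : k ≠ a := ne_of_lt hk
            constructor
            · intro h
              have : k ∈ S.erase a := Finset.mem_erase.2 ⟨hka, h⟩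
              rw [← heq] at this
              exact (Finset.mem_erase.1 this).2
            · intro h
              have : k ∈ U.erase a := Finset.mem_erase.2 ⟨hka, h⟩
              rw [heq] at this
              exact (Finset.mem_erase.1 this).2
          · -- a ∉ S, a ∈ U : coefficient vanishes, contradiction
            have haU : a ∈ U := by
              by_contra haU
              exact haSU ⟨fun h => absurd h haS, fun h => absurd h haU⟩
            exfalso
            apply hCne
            rw [if_pos haU]
            have hvS : vv S a = qv (a - (U.erase a).card) := by
              unfold vv
              rw [if_neg haS, dd_at_top hlt hS, ← heq]
            rw [hvS, sub_self, zero_div]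
      · -- min of symmetric difference
        have hms : m ∈ s := erase_subset_of_subset_insert hS hmS
        have hma : m ≠ a := ne_of_lt (hlt m hms)
        refine Or.inr ⟨m, (Finset.mem_erase.1 hmS).2, fun h => hmU (Finset.mem_erase.2 ⟨hma, h⟩),
          fun k hk => ?_⟩
        have hka : k ≠ a := by
          intro h
          subst h
          exact absurd (hlt m hms) (by omega)
        have := hag k hk
        rw [Finset.mem_erase, Finset.mem_erase] at this
        constructor
        · intro h; exact (this.1 ⟨hka, h⟩).2
        · intro h; exact (this.2 ⟨hka, h⟩).2


/- ### Composition bridge -/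

lemma sizeUpTo_mem_Ioo {n : ℕ} (I : Composition n) {i : ℕ} (hi : i ∈ Finset.Ioo 0 I.length) :
    I.sizeUpTo i ∈ Finset.Ioo 0 n := by
  rcases Finset.mem_Ioo.1 hi with ⟨h0, hl⟩
  refine Finset.mem_Ioo.2 ⟨?_, ?_⟩
  · have h01 : I.sizeUpTo 0 < I.sizeUpTo 1 := I.sizeUpTo_strict_mono (by omega)
    have h2 := I.monotone_sizeUpTo (show 1 ≤ i by omega)
    rw [Composition.sizeUpTo_zero] at h01
    omega
  · have h1 : I.sizeUpTo i < I.sizeUpTo (i + 1) := I.sizeUpTo_strict_mono hl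
    have h2 : I.sizeUpTo (i + 1) ≤ I.sizeUpTo I.length := I.monotone_sizeUpTo (by omega)
    rw [Composition.sizeUpTo_length] at h2
    omega

lemma Des_subset {n : ℕ} (I : Composition n) : Des I ⊆ Finset.Ioo 0 n := by
  intro k hk
  rcases Finset.mem_image.1 hk with ⟨i, hi, rfl⟩
  exact sizeUpTo_mem_Ioo I hi

lemma mem_boundaries_iff' {n : ℕ} (I : Composition n) (j : Fin (n + 1)) :
    j ∈ I.boundaries ↔ ∃ i : Fin (I.length + 1), I.sizeUpTo i = (j : ℕ) := by
  simp only [Composition.boundaries, Finset.mem_map, Finset.mem_univ, true_and]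
  constructor
  · rintro ⟨i, hi⟩
    exact ⟨i, by rw [← hi]; rfl⟩
  · rintro ⟨i, hi⟩
    exact ⟨i, Fin.ext hi⟩

lemma mem_boundaries_char {n : ℕ} (I : Composition n) (j : Fin (n + 1)) :
    j ∈ I.boundaries ↔ ((j : ℕ) = 0 ∨ (j : ℕ) = n ∨ (j : ℕ) ∈ Des I) := by
  rw [mem_boundaries_iff']
  constructor
  · rintro ⟨i, hi⟩
    rcases Nat.eq_zero_or_pos (i : ℕ) with h0 | h0
    · left; rw [← hi, h0, Composition.sizeUpTo_zero]
    · rcases eq_or_lt_of_le (Nat.lt_succ_iff.1 i.isLt) with hl | hl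
      · right; left; rw [← hi, hl, Composition.sizeUpTo_length]
      · right; right; exact Finset.mem_image.2 ⟨(i : ℕ), Finset.mem_Ioo.2 ⟨h0, hl⟩, hi⟩
  · rintro (h | h | h)
    · exact ⟨0, by simpa [Composition.sizeUpTo_zero] using h.symm⟩
    · exact ⟨Fin.last _, by simp [Composition.sizeUpTo_length, h]⟩
    · rcases Finset.mem_image.1 h with ⟨i, hi, hie⟩
      rcases Finset.mem_Ioo.1 hi with ⟨_, hil⟩
      exact ⟨⟨i, by omega⟩, hie⟩

lemma Des_injective {n : ℕ} : Function.Injective (Des : Composition n → Finset ℕ) := by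
  intro I J h
  have hb : I.toCompositionAsSet.boundaries = J.toCompositionAsSet.boundaries := by
    rw [Composition.toCompositionAsSet_boundaries, Composition.toCompositionAsSet_boundaries]
    ext j
    rw [mem_boundaries_char, mem_boundaries_char, h]
  have hIJ : I.toCompositionAsSet = J.toCompositionAsSet := CompositionAsSet.ext hb
  exact (compositionEquiv n).injective hIJ

lemma Des_image {n : ℕ} :
    (Finset.univ : Finset (Composition n)).image Des = (Finset.Ioo 0 n).powerset := by
  apply Finset.eq_of_subset_of_card_le
  · intro U hU
    rcases Finset.mem_image.1 hU with ⟨I, _, rfl⟩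
    exact Finset.mem_powerset.2 (Des_subset I)
  · rw [Finset.card_powerset, Finset.card_image_of_injective _ Des_injective,
      Finset.card_univ, composition_card, Nat.card_Ioo]
    norm_num

lemma two_pow_sum_lt (p : ℕ) : ∑ j ∈ Finset.range p, 2 ^ j < 2 ^ p := by
  induction p with
  | zero => simp
  | succ p ih =>
    rw [Finset.sum_range_succ, pow_succ]
    omega

lemma below_bOrd {n : ℕ} {I J : Composition n} (h : Below (Des I) (Des J)) :
    bOrd J ≤ bOrd I := by
  rcases h with heq | ⟨m, hmI, hmJ, hag⟩
  · exact le_of_eq (by unfold bOrd; rw [heq])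
  · unfold bOrd
    rw [← Finset.sum_filter_add_sum_filter_not (Des J) (· < m) (fun k => 2 ^ (n - 1 - k)),
      ← Finset.sum_filter_add_sum_filter_not (Des I) (· < m) (fun k => 2 ^ (n - 1 - k))]
    have heqf : (Des J).filter (· < m) = (Des I).filter (· < m) := by
      ext k
      simp only [Finset.mem_filter]
      constructor
      · rintro ⟨h1, h2⟩; exact ⟨(hag k h2).2 h1, h2⟩
      · rintro ⟨h1, h2⟩; exact ⟨(hag k h2).1 h1, h2⟩
    rw [heqf]
    have hkey : ∀ k ∈ (Des J).filter (fun k => ¬ k < m), m < k ∧ k ≤ n - 1 := by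
      intro k hk
      rcases Finset.mem_filter.1 hk with ⟨hkJ, hkm⟩
      have hkn := Finset.mem_Ioo.1 (Des_subset J hkJ)
      have : k ≠ m := fun hh => hmJ (hh ▸ hkJ)
      omega
    have hm1 : m ≤ n - 1 := by
      have := Finset.mem_Ioo.1 (Des_subset I hmI)
      omega
    have hlt : ∑ k ∈ (Des J).filter (fun k => ¬ k < m), 2 ^ (n - 1 - k) < 2 ^ (n - 1 - m) := by
      have hinj : ∀ x ∈ (Des J).filter (fun k => ¬ k < m),
          ∀ y ∈ (Des J).filter (fun k => ¬ k < m), n - 1 - x = n - 1 - y → x = y := by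
        intro x hx y hy hxy
        have := hkey x hx
        have := hkey y hy
        omega
      calc ∑ k ∈ (Des J).filter (fun k => ¬ k < m), 2 ^ (n - 1 - k)
          = ∑ j ∈ ((Des J).filter (fun k => ¬ k < m)).image (fun k => n - 1 - k), 2 ^ j :=
            (Finset.sum_image hinj).symm
        _ ≤ ∑ j ∈ Finset.range (n - 1 - m), 2 ^ j := by
            apply Finset.sum_le_sum_of_subset
            intro j hj
            rcases Finset.mem_image.1 hj with ⟨k, hk, rfl⟩
            have := hkey k hk
            exact Finset.mem_range.2 (by omega)
        _ < 2 ^ (n - 1 - m) := two_pow_sum_lt _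
    have hge : 2 ^ (n - 1 - m) ≤ ∑ k ∈ (Des I).filter (fun k => ¬ k < m), 2 ^ (n - 1 - k) := by
      have hmm : m ∈ (Des I).filter (fun k => ¬ k < m) :=
        Finset.mem_filter.2 ⟨hmI, by omega⟩
      exact Finset.single_le_sum (f := fun k => 2 ^ (n - 1 - k)) (fun i _ => Nat.zero_le _) hmm
    omega

/-- `K_n(Q,𝟏)` is invertible, and `K_n(Q,T)·K_n(Q,𝟏)⁻¹` is lower triangular with respect to
the order `b(I) = ∑_{k ∈ Des I} 2^{n−1−k}` on compositions: its `(I,J)` entry vanishes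
whenever `b(I) < b(J)`. -/
theorem KQT_mul_KQ1_inv_lowerTriangular {n : ℕ} (hn : 1 ≤ n) :
    (KQ1 n).det ≠ 0 ∧
    ∀ I J : Composition n, bOrd I < bOrd J → (KQT n * (KQ1 n)⁻¹) I J = 0 := by
  obtain ⟨L, M, h1, h2, h3⟩ := main_induction (Finset.Ioo 0 n)
  have hDes : ∀ I : Composition n, Des I ∈ (Finset.Ioo 0 n).powerset :=
    fun I => Finset.mem_powerset.2 (Des_subset I)
  have hsum : ∀ f : Finset ℕ → FQT,
      ∑ K : Composition n, f (Des K) = ∑ U ∈ (Finset.Ioo 0 n).powerset, f U := by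
    intro f
    rw [← Des_image (n := n), Finset.sum_image (fun x _ y _ h => Des_injective h)]
  have hright : KQ1 n * (Matrix.of fun K J : Composition n => M (Des K) (Des J)) = 1 := by
    ext I J
    rw [Matrix.mul_apply]
    have e1 : ∑ K : Composition n, KQ1 n I K *
        (Matrix.of fun K J : Composition n => M (Des K) (Des J)) K J
        = ∑ U ∈ (Finset.Ioo 0 n).powerset, K1R (Des I) U * M U (Des J) :=
      hsum (fun U => K1R (Des I) U * M U (Des J))
    rw [e1, h2 _ (hDes I) _ (hDes J), Matrix.one_apply]
    by_cases h : I = J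
    · rw [if_pos h, if_pos (by rw [h])]
    · rw [if_neg (fun hD => h (Des_injective hD)), if_neg h]
  have hdet : IsUnit (KQ1 n).det := Matrix.isUnit_det_of_right_inverse hright
  refine ⟨hdet.ne_zero, ?_⟩
  intro I J hb
  have hfact : KQT n = (Matrix.of fun I K : Composition n => L (Des I) (Des K)) * KQ1 n := by
    ext I' J'
    rw [Matrix.mul_apply]
    have e1 : ∑ K : Composition n,
        (Matrix.of fun I K : Composition n => L (Des I) (Des K)) I' K * KQ1 n K J'
        = ∑ U ∈ (Finset.Ioo 0 n).powerset, L (Des I') U * K1R U (Des J') :=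
      hsum (fun U => L (Des I') U * K1R U (Des J'))
    rw [e1, ← h1 _ (hDes I') _ (hDes J')]
    rfl
  have hprod : KQT n * (KQ1 n)⁻¹ = Matrix.of fun I K : Composition n => L (Des I) (Des K) := by
    rw [hfact, Matrix.mul_assoc, Matrix.mul_nonsing_inv _ hdet, Matrix.mul_one]
  rw [hprod]
  by_contra hne
  have hBel : Below (Des I) (Des J) := h3 _ (hDes I) _ (hDes J) hne
  exact absurd (below_bOrd hBel) (by omega)
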